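/- Let V be a finite vertex set partitioned into honest vertices H and cheaters C, with every endorsement from H going into H and every accusation from H going into C. Suppose that for every nonempty set S ⊆ C there exists a set K ⊆ V such that: (1) S ⊆ ρ(K); (2) S ∩ ρ(k) ≠ ∅ for every k ∈ K; and (3) there exists U ⊆ H with U ⊣ K and |ρ_H(U)| > |ρ(K)|. Then every self-consistent insular set Q with Q ∩ C ≠ ∅ satisfies |Q| < |H|; hence H is the unique maximum-cardinality self-consistent insular subset of V. -/

import Mathlib

/-- `ρ(U)`: vertices with an endorsement path into `U`. -/
def rhoSet {V : Type*} (E : V → V → Prop) (U : Set V) : Set V :=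
  {v | ∃ u ∈ U, Relation.ReflTransGen E v u}

/-- `ρ_H(U)`: vertices with an endorsement path into `U` staying inside `H`. -/
def rhoSetIn {V : Type*} (E : V → V → Prop) (H : Set V) (U : Set V) : Set V :=
  {v | ∃ u ∈ U, Relation.ReflTransGen (fun a b => E a b ∧ a ∈ H ∧ b ∈ H) v u}

/-- Under the tree condition, every self-consistent insular set meeting `C` is
strictly smaller than `H`; hence `H` is the unique maximum self-consistent insular set. -/
theorem stmt_5 {V : Type*} [Fintype V] (E A : V → V → Prop)
    (hE : Irreflexive E) (hA : Irreflexive A)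
    (H C : Set V) (hdisj : Disjoint H C) (hcover : H ∪ C = Set.univ)
    (hEnd : ∀ u v, u ∈ H → E u v → v ∈ H)
    (hAcc : ∀ u v, u ∈ H → A u v → v ∈ C)
    (hyp : ∀ S ⊆ C, S.Nonempty → ∃ K : Set V,
      S ⊆ rhoSet E K ∧
      (∀ k ∈ K, (S ∩ rhoSet E {k}).Nonempty) ∧
      ∃ U ⊆ H, ((∀ t ∈ U, ∃ s ∈ K, A t s) ∧ (∀ s ∈ K, ∃ t ∈ U, A t s)) ∧
        (rhoSet E K).ncard < (rhoSetIn E H U).ncard) :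
    (∀ Q : Set V, (∀ u ∈ Q, ∀ v ∈ Q, ¬ A u v) → (∀ u ∈ Q, ∀ v, E u v → v ∈ Q) →
      (Q ∩ C).Nonempty → Q.ncard < H.ncard) ∧
    (∀ Q : Set V, (∀ u ∈ Q, ∀ v ∈ Q, ¬ A u v) → (∀ u ∈ Q, ∀ v, E u v → v ∈ Q) →
      Q ≠ H → Q.ncard < H.ncard) := by
  have fin : ∀ s : Set V, s.Finite := fun s => s.toFinite
  have main : ∀ Q : Set V, (∀ u ∈ Q, ∀ v ∈ Q, ¬ A u v) → (∀ u ∈ Q, ∀ v, E u v → v ∈ Q) →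
      (Q ∩ C).Nonempty → Q.ncard < H.ncard := by
    intro Q hSC hIns hQC
    obtain ⟨K, hSK, hKS, U, hUH, ⟨hUK, _⟩, hcard⟩ :=
      hyp (Q ∩ C) Set.inter_subset_right hQC
    have hreach : ∀ s k, s ∈ Q → Relation.ReflTransGen E s k → k ∈ Q := by
      intro s k hs hp
      induction hp with
      | refl => exact hs
      | tail _ e ih => exact hIns _ ih _ e
    have hKQ : K ⊆ Q := by
      intro k hk
      obtain ⟨s, ⟨hsQ, _⟩, u, hu, hp⟩ := hKS k hk
      rcases hu with rfl
      exact hreach _ _ hsQ hp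
    have hUQ : ∀ t ∈ U, t ∉ Q := by
      intro t ht htQ
      obtain ⟨s, hsK, hAts⟩ := hUK t ht
      exact hSC t htQ s (hKQ hsK) hAts
    have hρH_sub : rhoSetIn E H U ⊆ H := by
      rintro v ⟨u, hu, hp⟩
      rcases hp.cases_head with h | ⟨c, hc, _⟩
      · exact h ▸ hUH hu
      · exact hc.2.1
    have hdisjQ : Disjoint (rhoSetIn E H U) Q := by
      rw [Set.disjoint_left]
      rintro v ⟨u, hu, hp⟩ hvQ
      exact hUQ u hu (hreach _ _ hvQ (Relation.ReflTransGen.mono (fun a b (h : E a b ∧ a ∈ H ∧ b ∈ H) => h.1) _ _ hp))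
    have h1 : Q.ncard = (Q ∩ H).ncard + (Q ∩ C).ncard := by
      rw [← Set.ncard_union_eq
        ((hdisj.mono Set.inter_subset_right Set.inter_subset_right)) (fin _) (fin _)]
      congr 1
      rw [← Set.inter_union_distrib_left, hcover, Set.inter_univ]
    have h2 : (Q ∩ C).ncard < (rhoSetIn E H U).ncard :=
      lt_of_le_of_lt (Set.ncard_le_ncard hSK (fin _)) hcard
    have h3 : (Q ∩ H).ncard + (rhoSetIn E H U).ncard ≤ H.ncard := by
      rw [← Set.ncard_union_eq (hdisjQ.symm.mono_left Set.inter_subset_left) (fin _) (fin _)]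
      exact Set.ncard_le_ncard (Set.union_subset Set.inter_subset_right hρH_sub) (fin _)
    omega
  refine ⟨main, fun Q hSC hIns hne => ?_⟩
  by_cases h : (Q ∩ C).Nonempty
  · exact main Q hSC hIns h
  · have hQH : Q ⊆ H := by
      intro q hq
      rcases (hcover ▸ Set.mem_univ q : q ∈ H ∪ C) with h' | h'
      · exact h'
      · exact absurd ⟨q, hq, h'⟩ h
    exact Set.ncard_lt_ncard (hQH.ssubset_of_ne hne) (fin _)
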